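/- Let ζ_1,…,ζ_M be pairwise distinct nonzero complex numbers and c_1,…,c_M, d_1,…,d_M ∈ ℂ with (c_m, d_m) ≠ (0,0) for every m, let h(n) = Σ_{m=1}^M (n c_m + d_m) ζ_m^n, let S = {m : c_m ≠ 0} and M' = M + |S|, and let N > L ≥ M' be integers. Let H ∈ ℂ^{(2N−L)×(L+1)} be the Hankel matrix with entries H_{r,s} = h(r+s+1). Then for any ζ ∈ ℂ, the vector φ_ζ = (1, ζ, ζ², …, ζ^{2N−L−1})ᵀ ∈ ℂ^{2N−L} lies in the column space of H if and only if ζ ∈ {ζ_1,…,ζ_M}. -/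

import Mathlib

open Matrix Polynomial Finset

lemma sum_coeff_pow {K : ℕ} (Q : ℂ[X]) (h : Q.natDegree < K) (z : ℂ) :
    ∑ n ∈ Finset.range K, Q.coeff n * z ^ n = Q.eval z :=
  (Polynomial.eval_eq_sum_range' h z).symm

lemma sum_coeff_n_pow {K : ℕ} (Q : ℂ[X]) (h : Q.natDegree < K) (z : ℂ) :
    ∑ n ∈ Finset.range K, Q.coeff n * ((n : ℂ) * z ^ n) = z * Q.derivative.eval z := by
  have h2 : Q.derivative.natDegree < K :=
    lt_of_le_of_lt (Polynomial.natDegree_derivative_le Q) (by omega)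
  rw [Polynomial.eval_eq_sum_range' h2 z]
  obtain ⟨K, rfl⟩ : ∃ k, K = k + 1 := ⟨K - 1, by omega⟩
  rw [Finset.sum_range_succ' (fun n => Q.coeff n * ((n:ℂ) * z ^ n)) K]
  rw [Finset.mul_sum, Finset.sum_range_succ]
  have hcK : Q.coeff (K + 1) = 0 := Q.coeff_eq_zero_of_natDegree_lt (by omega)
  simp only [Polynomial.coeff_derivative, hcK, Nat.cast_zero, zero_mul, mul_zero, add_zero,
    zero_add, Nat.cast_add, Nat.cast_one]
  apply Finset.sum_congr rfl
  intro i _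
  ring

lemma double_root {a : ℂ} {G : ℂ[X]} (h : (X - C a) ^ 2 ∣ G) :
    G.eval a = 0 ∧ G.derivative.eval a = 0 := by
  obtain ⟨R, rfl⟩ := h
  constructor
  · simp
  · simp [Polynomial.derivative_mul, Polynomial.derivative_pow]

lemma single_root_deriv (a : ℂ) (U : ℂ[X]) :
    ((X - C a) * U).derivative.eval a = U.eval a := by
  simp [Polynomial.derivative_mul]

lemma swap_sum {M L : ℕ} (ζ c d : Fin M → ℂ) (x : Fin (L+1) → ℂ) (r : ℕ) :
    ∑ s : Fin (L+1), (∑ m, (((r + (s:ℕ) + 1 : ℕ) : ℂ) * c m + d m) * ζ m ^ (r + (s:ℕ) + 1)) * x s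
    = ∑ m, ((c m * ∑ s : Fin (L+1), x s * ζ m ^ ((s:ℕ)+1)) * (r : ℂ)
        + (c m * ∑ s : Fin (L+1), (((s:ℕ)+1 : ℕ) : ℂ) * (x s * ζ m ^ ((s:ℕ)+1))
           + d m * ∑ s : Fin (L+1), x s * ζ m ^ ((s:ℕ)+1))) * ζ m ^ r := by
  simp only [Finset.sum_mul, Finset.mul_sum]
  rw [Finset.sum_comm]
  apply Finset.sum_congr rfl
  intro m _
  rw [add_mul, add_mul, Finset.sum_mul, Finset.sum_mul, Finset.sum_mul,
    ← Finset.sum_add_distrib, ← Finset.sum_add_distrib]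
  apply Finset.sum_congr rfl
  intro s _
  have hp : ζ m ^ (r + (s:ℕ) + 1) = ζ m ^ r * ζ m ^ ((s:ℕ)+1) := by
    rw [← pow_add]; ring_nf
  rw [hp]
  push_cast
  ring

lemma interp_suffices {M L : ℕ} (ζ c d : Fin M → ℂ) (m0 : Fin M) (G : ℂ[X])
    (h1 : G.natDegree < L + 2) (h2 : G.coeff 0 = 0)
    (h3 : ∀ m, c m * G.eval (ζ m) = 0)
    (h4 : ∀ m, m ≠ m0 → c m * (ζ m * G.derivative.eval (ζ m)) + d m * G.eval (ζ m) = 0)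
    (h5 : c m0 * (ζ m0 * G.derivative.eval (ζ m0)) + d m0 * G.eval (ζ m0) = 1) (r : ℕ) :
    ∑ s : Fin (L+1), (∑ m, (((r + (s:ℕ) + 1 : ℕ) : ℂ) * c m + d m) * ζ m ^ (r + (s:ℕ) + 1))
        * G.coeff ((s:ℕ)+1) = ζ m0 ^ r := by
  rw [swap_sum ζ c d (fun s => G.coeff ((s:ℕ)+1)) r]
  have hP1 : ∀ z : ℂ, (∑ s : Fin (L+1), G.coeff ((s:ℕ)+1) * z ^ ((s:ℕ)+1)) = G.eval z := by
    intro z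
    rw [← sum_coeff_pow G h1 z, Finset.sum_range_succ' (fun n => G.coeff n * z ^ n) (L+1),
      Fin.sum_univ_eq_sum_range (fun i => G.coeff (i+1) * z ^ (i+1)) (L+1)]
    simp [h2]
  have hP2 : ∀ z : ℂ, (∑ s : Fin (L+1), (((s:ℕ)+1 : ℕ) : ℂ) * (G.coeff ((s:ℕ)+1) * z ^ ((s:ℕ)+1)))
      = z * G.derivative.eval z := by
    intro z
    rw [← sum_coeff_n_pow G h1 z,
      Finset.sum_range_succ' (fun n => G.coeff n * ((n:ℂ) * z ^ n)) (L+1),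
      Fin.sum_univ_eq_sum_range (fun i => ((i+1 : ℕ) : ℂ) * (G.coeff (i+1) * z ^ (i+1))) (L+1)]
    simp only [h2, Nat.cast_zero, zero_mul, mul_zero, zero_add, add_zero]
    apply Finset.sum_congr rfl
    intro i _
    push_cast
    ring
  simp only [hP1, hP2]
  rw [Finset.sum_eq_single m0]
  · rw [h3 m0, h5]; simp
  · intro b _ hb
    rw [h3 b, h4 b hb]; simp
  · intro h; exact absurd (Finset.mem_univ m0) h

/-- For pairwise distinct nonzero nodes `ζ_m` and coefficients `c_m, d_m` with
`(c_m, d_m) ≠ (0,0)` for every `m`, with `h(n) = Σ_m (n c_m + d_m) ζ_m^n`,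
`S = {m : c_m ≠ 0}`, `M' = M + |S|` and integers `N > L ≥ M'`, a vector
`φ_ζ = (1, ζ, ζ², …, ζ^{2N−L−1})ᵀ` lies in the column space of the Hankel matrix
`H ∈ ℂ^{(2N−L)×(L+1)}`, `H_{r,s} = h(r+s+1)`, if and only if `ζ ∈ {ζ_1, …, ζ_M}`. -/
theorem testVector_mem_range_hankel_iff (M N L : ℕ) (ζ c d : Fin M → ℂ)
    (hζ : Function.Injective ζ) (hζ0 : ∀ m, ζ m ≠ 0)
    (hcd : ∀ m, c m ≠ 0 ∨ d m ≠ 0)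
    (S : Finset (Fin M)) (hS : ∀ m, m ∈ S ↔ c m ≠ 0)
    (hL : M + S.card ≤ L) (hNL : L < N) (ξ : ℂ) :
    (fun n : Fin (2 * N - L) => ξ ^ (n : ℕ)) ∈
        LinearMap.range (Matrix.of fun (r : Fin (2 * N - L)) (s : Fin (L + 1)) =>
          ∑ m, ((((r : ℕ) + (s : ℕ) + 1 : ℕ) : ℂ) * c m + d m)
            * ζ m ^ ((r : ℕ) + (s : ℕ) + 1)).mulVecLin
      ↔ ∃ m, ξ = ζ m := by
  have hK : L + 2 ≤ 2 * N - L := by omega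
  constructor
  · rintro ⟨x, hx⟩
    by_contra hne
    push_neg at hne
    simp only [Matrix.mulVecLin_apply, Matrix.mulVec, dotProduct, Matrix.of_apply] at hx
    have hx' : ∀ n : ℕ, n < 2 * N - L →
        ∑ s : Fin (L+1), (∑ m, (((n + (s:ℕ) + 1 : ℕ) : ℂ) * c m + d m)
          * ζ m ^ (n + (s:ℕ) + 1)) * x s = ξ ^ n := by
      intro n hn
      exact congrFun hx ⟨n, hn⟩
    obtain ⟨A, hAdef⟩ : ∃ A : Fin M → ℂ, A = fun m =>
        c m * ∑ s : Fin (L+1), x s * ζ m ^ ((s:ℕ)+1) := ⟨_, rfl⟩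
    obtain ⟨B, hBdef⟩ : ∃ B : Fin M → ℂ, B = fun m =>
        c m * (∑ s : Fin (L+1), (((s:ℕ)+1 : ℕ) : ℂ) * (x s * ζ m ^ ((s:ℕ)+1)))
          + d m * ∑ s : Fin (L+1), x s * ζ m ^ ((s:ℕ)+1) := ⟨_, rfl⟩
    have hrel : ∀ n : ℕ, n < 2 * N - L →
        ξ ^ n = ∑ m, (A m * (n : ℂ) + B m) * ζ m ^ n := by
      intro n hn
      rw [← hx' n hn, swap_sum ζ c d x n]
      simp only [hAdef, hBdef]
    set Q : ℂ[X] := ∏ m : Fin M, (X - C (ζ m)) ^ (if m ∈ S then 2 else 1) with hQdef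
    have hQdeg : Q.natDegree < 2 * N - L := by
      have h1 : Q.natDegree ≤ ∑ m : Fin M, ((X - C (ζ m)) ^ (if m ∈ S then 2 else 1)).natDegree :=
        Polynomial.natDegree_prod_le _ _
      have h2 : ∀ m : Fin M, ((X - C (ζ m)) ^ (if m ∈ S then 2 else 1)).natDegree
          = (if m ∈ S then 2 else 1) := by
        intro m
        rw [Polynomial.natDegree_pow, Polynomial.natDegree_X_sub_C, mul_one]
      have h3 : ∑ m : Fin M, (if m ∈ S then 2 else 1) = M + S.card := by
        have : ∀ m : Fin M, (if m ∈ S then 2 else 1) = 1 + (if m ∈ S then 1 else 0) := by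
          intro m; split <;> rfl
        simp only [this, Finset.sum_add_distrib, Finset.sum_const, Finset.card_univ,
          Fintype.card_fin, smul_eq_mul, mul_one, Finset.sum_ite_mem, Finset.univ_inter]
      have : Q.natDegree ≤ M + S.card := by
        rw [← h3]
        refine le_trans h1 (le_of_eq ?_)
        exact Finset.sum_congr rfl fun m _ => h2 m
      omega
    have hQroot : ∀ m, Q.eval (ζ m) = 0 := by
      intro m
      rw [hQdef, Polynomial.eval_prod]
      apply Finset.prod_eq_zero (Finset.mem_univ m)
      rw [Polynomial.eval_pow, Polynomial.eval_sub, Polynomial.eval_X, Polynomial.eval_C, sub_self]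
      exact zero_pow (by split <;> norm_num)
    have hQd : ∀ m ∈ S, Q.derivative.eval (ζ m) = 0 := by
      intro m hm
      have hdvd : (X - C (ζ m)) ^ 2 ∣ Q := by
        rw [hQdef]
        have h := Finset.dvd_prod_of_mem (fun m => (X - C (ζ m)) ^ (if m ∈ S then 2 else 1))
          (Finset.mem_univ m)
        simpa [hm] using h
      exact (double_root hdvd).2
    have key : Q.eval ξ = ∑ m, (A m * (ζ m * Q.derivative.eval (ζ m))
        + B m * Q.eval (ζ m)) := by
      rw [← sum_coeff_pow Q hQdeg ξ]
      have step1 : ∑ n ∈ Finset.range (2*N-L), Q.coeff n * ξ ^ n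
          = ∑ n ∈ Finset.range (2*N-L), Q.coeff n
            * (∑ m, (A m * (n : ℂ) + B m) * ζ m ^ n) := by
        apply Finset.sum_congr rfl
        intro n hn
        rw [hrel n (Finset.mem_range.mp hn)]
      rw [step1]
      simp only [Finset.mul_sum]
      rw [Finset.sum_comm]
      apply Finset.sum_congr rfl
      intro m _
      rw [← sum_coeff_n_pow Q hQdeg (ζ m), ← sum_coeff_pow Q hQdeg (ζ m),
        Finset.mul_sum, Finset.mul_sum, ← Finset.sum_add_distrib]
      apply Finset.sum_congr rfl
      intro n _
      ring
    have hzero : Q.eval ξ = 0 := by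
      rw [key]
      apply Finset.sum_eq_zero
      intro m _
      by_cases hm : m ∈ S
      · rw [hQroot m, hQd m hm]
        ring
      · have hc : c m = 0 := by
          by_contra hc
          exact hm ((hS m).mpr hc)
        have hA0 : A m = 0 := by rw [hAdef]; simp [hc]
        rw [hQroot m, hA0]
        ring
    have hne' : Q.eval ξ ≠ 0 := by
      rw [hQdef, Polynomial.eval_prod]
      apply Finset.prod_ne_zero_iff.mpr
      intro m _
      rw [Polynomial.eval_pow, Polynomial.eval_sub, Polynomial.eval_X, Polynomial.eval_C]
      exact pow_ne_zero _ (sub_ne_zero.mpr (hne m))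
    exact hne' hzero
  · rintro ⟨m0, rfl⟩
    set W : ℂ[X] := ∏ m ∈ Finset.univ.erase m0, (X - C (ζ m)) ^ (if m ∈ S then 2 else 1)
      with hWdef
    have hW0 : W.eval (ζ m0) ≠ 0 := by
      rw [hWdef, Polynomial.eval_prod]
      apply Finset.prod_ne_zero_iff.mpr
      intro m hm
      rw [Polynomial.eval_pow, Polynomial.eval_sub, Polynomial.eval_X, Polynomial.eval_C]
      exact pow_ne_zero _ (sub_ne_zero.mpr fun h => (Finset.mem_erase.mp hm).1 (hζ h).symm)
    have hWroot : ∀ m, m ≠ m0 → W.eval (ζ m) = 0 := by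
      intro m hm
      rw [hWdef, Polynomial.eval_prod]
      apply Finset.prod_eq_zero (Finset.mem_erase.mpr ⟨hm, Finset.mem_univ m⟩)
      rw [Polynomial.eval_pow, Polynomial.eval_sub, Polynomial.eval_X, Polynomial.eval_C, sub_self]
      exact zero_pow (by split <;> norm_num)
    have hWdvd : ∀ m, m ≠ m0 → m ∈ S → (X - C (ζ m)) ^ 2 ∣ W := by
      intro m hm hmS
      rw [hWdef]
      have h := Finset.dvd_prod_of_mem (fun m => (X - C (ζ m)) ^ (if m ∈ S then 2 else 1))
        (Finset.mem_erase.mpr ⟨hm, Finset.mem_univ m⟩)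
      simpa [hmS] using h
    have hWdeg : W.natDegree ≤ M - 1 + S.card := by
      have h1 : W.natDegree
          ≤ ∑ m ∈ Finset.univ.erase m0, ((X - C (ζ m)) ^ (if m ∈ S then 2 else 1)).natDegree :=
        Polynomial.natDegree_prod_le _ _
      have h2 : ∀ m ∈ Finset.univ.erase m0, ((X - C (ζ m)) ^ (if m ∈ S then 2 else 1)).natDegree
          = (if m ∈ S then 2 else 1) := by
        intro m _
        rw [Polynomial.natDegree_pow, Polynomial.natDegree_X_sub_C, mul_one]
      rw [Finset.sum_congr rfl h2] at h1
      have h3 : ∑ m ∈ Finset.univ.erase m0, (if m ∈ S then 2 else 1)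
          ≤ (M - 1) + S.card := by
        have he : ∀ m : Fin M, (if m ∈ S then 2 else 1) = 1 + (if m ∈ S then 1 else 0) := by
          intro m; split <;> rfl
        simp only [he, Finset.sum_add_distrib, Finset.sum_const, smul_eq_mul, mul_one,
          Finset.sum_ite_mem]
        have hc1 : (Finset.univ.erase m0).card = M - 1 := by
          rw [Finset.card_erase_of_mem (Finset.mem_univ m0), Finset.card_univ, Fintype.card_fin]
        have hc2 : ((Finset.univ.erase m0) ∩ S).card ≤ S.card :=
          Finset.card_le_card (Finset.inter_subset_right)
        omega
      omega
    -- two cases for the interpolating polynomial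
    by_cases hm0S : m0 ∈ S
    · -- c m0 ≠ 0
      have hc0 : c m0 ≠ 0 := (hS m0).mp hm0S
      set k : ℂ := (c m0 * (ζ m0 * (ζ m0 * W.eval (ζ m0))))⁻¹ with hkdef
      set G : ℂ[X] := (X - C (ζ m0)) * (C k * (X * W)) with hGdef
      have hGeval : ∀ m, G.eval (ζ m) = 0 := by
        intro m
        by_cases hm : m = m0
        · subst hm; simp [hGdef]
        · simp [hGdef, hWroot m hm]
      have hGdvd : ∀ m, m ≠ m0 → m ∈ S → (X - C (ζ m)) ^ 2 ∣ G := by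
        intro m hm hmS
        refine Dvd.dvd.trans (hWdvd m hm hmS) ?_
        rw [hGdef]
        exact dvd_mul_of_dvd_right (dvd_mul_of_dvd_right (dvd_mul_left W X) (C k)) (X - C (ζ m0))
      refine ⟨fun s => G.coeff ((s:ℕ)+1), ?_⟩
      have h1 : G.natDegree < L + 2 := by
        have hb : G.natDegree ≤ 1 + (0 + (1 + W.natDegree)) := by
          apply le_trans (Polynomial.natDegree_mul_le)
          have : ((X : ℂ[X]) - C (ζ m0)).natDegree = 1 := Polynomial.natDegree_X_sub_C _
          rw [this]
          apply Nat.add_le_add_left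
          apply le_trans (Polynomial.natDegree_mul_le)
          apply add_le_add (le_of_eq (Polynomial.natDegree_C k))
          apply le_trans (Polynomial.natDegree_mul_le)
          rw [Polynomial.natDegree_X]
        have hM : 1 ≤ M := by
          rcases Nat.eq_zero_or_pos M with h | h
          · exact absurd m0.2 (by omega)
          · exact h
        omega
      have h2 : G.coeff 0 = 0 := by
        rw [Polynomial.coeff_zero_eq_eval_zero]
        simp [hGdef]
      have h3 : ∀ m, c m * G.eval (ζ m) = 0 := fun m => by rw [hGeval m, mul_zero]
      have h4 : ∀ m, m ≠ m0 → c m * (ζ m * G.derivative.eval (ζ m)) + d m * G.eval (ζ m) = 0 := by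
        intro m hm
        by_cases hmS : m ∈ S
        · obtain ⟨he1, he2⟩ := double_root (hGdvd m hm hmS)
          rw [he1, he2]; ring
        · have hc : c m = 0 := by
            by_contra hc; exact hmS ((hS m).mpr hc)
          rw [hc, hGeval m]; ring
      have h5 : c m0 * (ζ m0 * G.derivative.eval (ζ m0)) + d m0 * G.eval (ζ m0) = 1 := by
        rw [hGeval m0, hGdef, single_root_deriv]
        have : (C k * (X * W)).eval (ζ m0) = k * (ζ m0 * W.eval (ζ m0)) := by simp
        rw [this, hkdef]
        have hz : ζ m0 ≠ 0 := hζ0 m0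
        field_simp
        simp
      ext r
      simp only [Matrix.mulVecLin_apply, Matrix.mulVec, dotProduct, Matrix.of_apply]
      exact interp_suffices ζ c d m0 G h1 h2 h3 h4 h5 (r : ℕ)
    · -- c m0 = 0, d m0 ≠ 0
      have hc0 : c m0 = 0 := by
        by_contra hc; exact hm0S ((hS m0).mpr hc)
      have hd0 : d m0 ≠ 0 := by
        rcases hcd m0 with h | h
        · exact absurd h (by simp [hc0])
        · exact h
      set k : ℂ := (d m0 * (ζ m0 * W.eval (ζ m0)))⁻¹ with hkdef
      set G : ℂ[X] := C k * (X * W) with hGdef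
      have hGeval : ∀ m, m ≠ m0 → G.eval (ζ m) = 0 := by
        intro m hm
        simp [hGdef, hWroot m hm]
      have hGdvd : ∀ m, m ≠ m0 → m ∈ S → (X - C (ζ m)) ^ 2 ∣ G := by
        intro m hm hmS
        refine Dvd.dvd.trans (hWdvd m hm hmS) ?_
        rw [hGdef]
        exact dvd_mul_of_dvd_right (dvd_mul_left W X) (C k)
      refine ⟨fun s => G.coeff ((s:ℕ)+1), ?_⟩
      have h1 : G.natDegree < L + 2 := by
        have hb : G.natDegree ≤ 0 + (1 + W.natDegree) := by
          apply le_trans (Polynomial.natDegree_mul_le)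
          apply add_le_add (le_of_eq (Polynomial.natDegree_C k))
          apply le_trans (Polynomial.natDegree_mul_le)
          rw [Polynomial.natDegree_X]
        have hM : 1 ≤ M := by
          rcases Nat.eq_zero_or_pos M with h | h
          · exact absurd m0.2 (by omega)
          · exact h
        omega
      have h2 : G.coeff 0 = 0 := by
        rw [Polynomial.coeff_zero_eq_eval_zero]
        simp [hGdef]
      have h3 : ∀ m, c m * G.eval (ζ m) = 0 := by
        intro m
        by_cases hm : m = m0
        · subst hm; rw [hc0, zero_mul]
        · rw [hGeval m hm, mul_zero]
      have h4 : ∀ m, m ≠ m0 → c m * (ζ m * G.derivative.eval (ζ m)) + d m * G.eval (ζ m) = 0 := by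
        intro m hm
        by_cases hmS : m ∈ S
        · obtain ⟨he1, he2⟩ := double_root (hGdvd m hm hmS)
          rw [he1, he2]; ring
        · have hc : c m = 0 := by
            by_contra hc; exact hmS ((hS m).mpr hc)
          rw [hc, hGeval m hm]; ring
      have h5 : c m0 * (ζ m0 * G.derivative.eval (ζ m0)) + d m0 * G.eval (ζ m0) = 1 := by
        have hGe : G.eval (ζ m0) = k * (ζ m0 * W.eval (ζ m0)) := by simp [hGdef]
        rw [hc0, hGe, hkdef]
        have hz : ζ m0 ≠ 0 := hζ0 m0
        field_simp
        simp
      ext r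
      simp only [Matrix.mulVecLin_apply, Matrix.mulVec, dotProduct, Matrix.of_apply]
      exact interp_suffices ζ c d m0 G h1 h2 h3 h4 h5 (r : ℕ)
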